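/- Let l > 0, M > 0, a ∈ ℝ, and suppose Δ(r) = (r² + a²)(1 − r²/l²) − 2Mr has four distinct real roots r̄₋ < r₋ < r₊ < r̄₊. Then M < r₊ and r̄₊ < l. -/

import Mathlib

/-- If `Δ(r) = (r² + a²)(1 − r²/l²) − 2Mr` (with `l > 0`, `M > 0`) has four distinct
real roots `r̄₋ < r₋ < r₊ < r̄₊`, then `M < r₊` and `r̄₊ < l`. -/
theorem kerrDeSitter_horizon_bounds
    (l M a rbm rm rp rbp : ℝ)
    (hl : 0 < l) (hM : 0 < M)
    (h1 : rbm < rm) (h2 : rm < rp) (h3 : rp < rbp)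
    (hrbm : (rbm ^ 2 + a ^ 2) * (1 - rbm ^ 2 / l ^ 2) - 2 * M * rbm = 0)
    (hrm : (rm ^ 2 + a ^ 2) * (1 - rm ^ 2 / l ^ 2) - 2 * M * rm = 0)
    (hrp : (rp ^ 2 + a ^ 2) * (1 - rp ^ 2 / l ^ 2) - 2 * M * rp = 0)
    (hrbp : (rbp ^ 2 + a ^ 2) * (1 - rbp ^ 2 / l ^ 2) - 2 * M * rbp = 0) :
    M < rp ∧ rbp < l := by
  have hlne : l ≠ 0 := ne_of_gt hl
  have hl2 : (0:ℝ) < l ^ 2 := by positivity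
  -- clear denominators: P r := (r²+a²)(l²-r²) - 2Ml²r = 0 at each root
  have hPw : (rbm^2+a^2)*(l^2-rbm^2) - 2*M*l^2*rbm = 0 := by
    field_simp at hrbm; linear_combination hrbm
  have hPx : (rm^2+a^2)*(l^2-rm^2) - 2*M*l^2*rm = 0 := by
    field_simp at hrm; linear_combination hrm
  have hPy : (rp^2+a^2)*(l^2-rp^2) - 2*M*l^2*rp = 0 := by
    field_simp at hrp; linear_combination hrp
  have hPz : (rbp^2+a^2)*(l^2-rbp^2) - 2*M*l^2*rbp = 0 := by
    field_simp at hrbp; linear_combination hrbp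
  -- divided differences
  have hG : ∀ u v : ℝ, (u^2+a^2)*(l^2-u^2) - 2*M*l^2*u = 0 →
      (v^2+a^2)*(l^2-v^2) - 2*M*l^2*v = 0 → u ≠ v →
      -(u^3+u^2*v+u*v^2+v^3) + (l^2-a^2)*(u+v) - 2*M*l^2 = 0 := by
    intro u v hu hv huv
    have h : (u - v) * (-(u^3+u^2*v+u*v^2+v^3) + (l^2-a^2)*(u+v) - 2*M*l^2) = 0 := by
      linear_combination hu - hv
    rcases mul_eq_zero.1 h with h | h
    · exact absurd (sub_eq_zero.1 h) huv
    · exact h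
  have hGwy := hG rbm rp hPw hPy (by linarith)
  have hGxy := hG rm rp hPx hPy (by linarith)
  have hGwz := hG rbm rbp hPw hPz (by linarith)
  have hGxz := hG rm rbp hPx hPz (by linarith)
  have hGwx := hG rbm rm hPw hPx (by linarith)
  have hH : ∀ u v t : ℝ,
      -(u^3+u^2*t+u*t^2+t^3) + (l^2-a^2)*(u+t) - 2*M*l^2 = 0 →
      -(v^3+v^2*t+v*t^2+t^3) + (l^2-a^2)*(v+t) - 2*M*l^2 = 0 → u ≠ v →
      -(u^2+u*v+v^2) - t*(u+v) - t^2 + (l^2-a^2) = 0 := by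
    intro u v t hu hv huv
    have h : (u - v) * (-(u^2+u*v+v^2) - t*(u+v) - t^2 + (l^2-a^2)) = 0 := by
      linear_combination hu - hv
    rcases mul_eq_zero.1 h with h | h
    · exact absurd (sub_eq_zero.1 h) huv
    · exact h
  have hHy := hH rbm rm rp hGwy hGxy (by linarith)
  have hHz := hH rbm rm rbp hGwz hGxz (by linarith)
  -- Vieta
  have hE1 : rbm + rm + rp + rbp = 0 := by
    have h : (rbp - rp) * (rbm + rm + rp + rbp) = 0 := by
      linear_combination hHy - hHz
    rcases mul_eq_zero.1 h with h | h
    · exact absurd (sub_eq_zero.1 h) (by intro hh; linarith)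
    · exact h
  have hE2 : rbm*rm + rbm*rp + rbm*rbp + rm*rp + rm*rbp + rp*rbp = a^2 - l^2 := by
    linear_combination (rbm+rm+rp)*hE1 + hHy
  have hE3 : rbm*rm*rp + rbm*rm*rbp + rbm*rp*rbp + rm*rp*rbp = -(2*M*l^2) := by
    linear_combination (rbm*rm - (rbm+rm)^2)*hE1 + (rbm+rm)*hE2 - hGwx
  have hE4 : rbm*rm*rp*rbp = -(a^2*l^2) := by
    linear_combination rbm^3*hE1 - rbm^2*hE2 + rbm*hE3 + hPw
  -- rp > 0
  have hy_pos : 0 < rp := by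
    by_contra h
    push_neg at h
    have hx : rm < 0 := lt_of_lt_of_le h2 h
    have hw : rbm < 0 := lt_trans h1 hx
    have hzval : rbp = -(rbm+rm+rp) := by linarith
    have he3' : rbm*rm*rp + rbm*rm*rbp + rbm*rp*rbp + rm*rp*rbp
        = -(rbm^2*rm + rbm^2*rp + rbm*rm^2 + rm^2*rp + rbm*rp^2 + rm*rp^2 + 2*(rbm*rm*rp)) := by
      rw [hzval]; ring
    have n1 : rbm^2*rm < 0 := mul_neg_of_pos_of_neg (pow_two_pos_of_ne_zero (ne_of_lt hw)) hx
    have n2 : rbm^2*rp ≤ 0 := mul_nonpos_of_nonneg_of_nonpos (sq_nonneg rbm) h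
    have n3 : rbm*rm^2 < 0 := mul_neg_of_neg_of_pos hw (pow_two_pos_of_ne_zero (ne_of_lt hx))
    have n4 : rm^2*rp ≤ 0 := mul_nonpos_of_nonneg_of_nonpos (sq_nonneg rm) h
    have n5 : rbm*rp^2 ≤ 0 := mul_nonpos_of_nonpos_of_nonneg hw.le (sq_nonneg rp)
    have n6 : rm*rp^2 ≤ 0 := mul_nonpos_of_nonpos_of_nonneg hx.le (sq_nonneg rp)
    have n7 : rbm*rm*rp ≤ 0 := mul_nonpos_of_nonneg_of_nonpos (mul_pos_of_neg_of_neg hw hx).le h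
    have hMl : 0 < 2*M*l^2 := by positivity
    linarith
  -- rp < l
  have hyl : rp < l := by
    have heq : (rp^2+a^2)*(l^2-rp^2) = 2*M*l^2*rp := by linarith
    have hsum : 0 < rp^2 + a^2 := by positivity
    have h1' : 0 < l^2 - rp^2 := by
      by_contra hc
      push_neg at hc
      have hle : (rp^2+a^2)*(l^2-rp^2) ≤ 0 := mul_nonpos_of_nonneg_of_nonpos hsum.le hc
      have hpos : 0 < 2*M*l^2*rp := by positivity
      linarith
    by_contra hc
    push_neg at hc
    have : l^2 ≤ rp^2 := pow_le_pow_left₀ hl.le hc 2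
    linarith
  -- M < rp, via Δ'(rp) > 0
  have hq : (rp - rbm)*(rp - rm)*(rp - rbp) = 2*M*l^2 + 2*a^2*rp + 4*rp^3 - 2*rp*l^2 := by
    linear_combination (-3*rp^2)*hE1 + (2*rp)*hE2 - hE3
  have hMy : M < rp := by
    have hneg : (rp - rbm)*(rp - rm)*(rp - rbp) < 0 :=
      mul_neg_of_pos_of_neg
        (mul_pos (by linarith : (0:ℝ) < rp - rbm) (by linarith : (0:ℝ) < rp - rm))
        (by linarith : rp - rbp < 0)
    have na : 0 ≤ a^2*rp := mul_nonneg (sq_nonneg a) hy_pos.le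
    have nb : 0 < rp^3 := pow_pos hy_pos 3
    have hlt : M*l^2 < rp*l^2 := by linarith
    exact lt_of_mul_lt_mul_right hlt hl2.le
  -- rbp < l
  have hprod4 : (l - rbm)*(l - rm)*(l - rp)*(l - rbp) = 2*M*l^3 := by
    linear_combination (-(l^3))*hE1 + l^2*hE2 - l*hE3 + hE4
  have hzl : rbp < l := by
    by_contra h
    push_neg at h
    have hp3 : 0 < (l - rbm)*(l - rm)*(l - rp) := by
      apply mul_pos (mul_pos _ _) <;> linarith
    have hnp : (l - rbm)*(l - rm)*(l - rp)*(l - rbp) ≤ 0 :=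
      mul_nonpos_of_nonneg_of_nonpos hp3.le (by linarith)
    have hpos : 0 < 2*M*l^3 := by positivity
    linarith
  exact ⟨hMy, hzl⟩
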